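/- (One-parametric subgroups are Diophantine, type A instance.) Let R be a commutative ring and let n ≥ 3. Then {⁅g, 1 + E_{23}⁆ : g ∈ SL_n(R) and g commutes with every element of Γ} = {1 + r • E_{13} : r ∈ R}, where ⁅x, y⁆ = x·y·x⁻¹·y⁻¹ denotes the commutator and Γ = {1 + E_{kl} : k ≠ l, k ≠ 2, l ≠ 1} (indices 1-based). In other words, the one-parametric root subgroup X_{13} = {t_{13}(r) : r ∈ R} equals the set of commutators of elements of the centralizer of Γ with the fixed transvection t_{23}(1). -/

import Mathlib

open Matrix
open scoped commutatorElement

/-- The elementary transvection `t_{23}(1) = 1 + E_{23}` (1-based indices) as an element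
of `SL_n(R)`. -/
def transvection23 (R : Type*) [CommRing R] {n : ℕ} (hn : 3 ≤ n) :
    Matrix.SpecialLinearGroup (Fin n) R :=
  ⟨1 + single (⟨1, by omega⟩ : Fin n) (⟨2, by omega⟩ : Fin n) 1,
    Matrix.det_transvection_of_ne _ _ (by simp [Fin.ext_iff]) 1⟩

section Aux

variable {R : Type*} [CommRing R] {n : ℕ}

lemma aux_det_transvection (i j : Fin n) (hij : i ≠ j) (s : R) :
    ((1 : Matrix (Fin n) (Fin n) R) + s • single i j 1).det = 1 := by
  have h : (1 : Matrix (Fin n) (Fin n) R) + s • single i j 1 =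
      Matrix.transvection i j s := by
    rw [Matrix.transvection, smul_single, smul_eq_mul, mul_one]
  rw [h]
  exact Matrix.det_transvection_of_ne _ _ hij s

lemma key (hn : 3 ≤ n) (g : Matrix.SpecialLinearGroup (Fin n) R)
    (hg : ∀ k l : Fin n, k ≠ l → k ≠ ⟨1, by omega⟩ → l ≠ ⟨0, by linarith⟩ →
        (g : Matrix (Fin n) (Fin n) R) * (1 + single k l 1) =
          (1 + single k l 1) * (g : Matrix (Fin n) (Fin n) R)) :
    (↑(⁅g, transvection23 R hn⁆) : Matrix (Fin n) (Fin n) R) =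
      1 + ((g : Matrix (Fin n) (Fin n) R) ⟨0, by linarith⟩ ⟨1, by omega⟩ *
        (g : Matrix (Fin n) (Fin n) R) ⟨2, by omega⟩ ⟨2, by omega⟩ ^ (n - 1)) •
        single (⟨0, by linarith⟩ : Fin n) (⟨2, by omega⟩ : Fin n) 1 := by
  set i0 : Fin n := ⟨0, by linarith⟩ with hi0
  set i1 : Fin n := ⟨1, by omega⟩ with hi1
  set i2 : Fin n := ⟨2, by omega⟩ with hi2
  set G : Matrix (Fin n) (Fin n) R := (g : Matrix (Fin n) (Fin n) R) with hG
  -- commuting with the std basis matrices themselves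
  have hg' : ∀ k l : Fin n, k ≠ l → k ≠ i1 → l ≠ i0 →
      G * single k l (1 : R) = single k l (1 : R) * G := by
    intro k l h1 h2 h3
    have := hg k l h1 h2 h3
    rw [mul_add, add_mul, mul_one, one_mul] at this
    exact add_left_cancel this
  -- columns (except column i1) are diagonal
  have fact1 : ∀ k l : Fin n, k ≠ l → k ≠ i1 → l ≠ i0 → ∀ a : Fin n, a ≠ k →
      G a k = 0 := by
    intro k l h1 h2 h3 a ha
    have := congrFun (congrFun (hg' k l h1 h2 h3) a) l
    rw [Matrix.mul_single_apply_same,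
      Matrix.single_mul_apply_of_ne (h := ha)] at this
    simpa using this
  -- diagonal entries are pairwise equal along admissible pairs
  have fact2 : ∀ k l : Fin n, k ≠ l → k ≠ i1 → l ≠ i0 → G k k = G l l := by
    intro k l h1 h2 h3
    have := congrFun (congrFun (hg' k l h1 h2 h3) k) l
    rw [Matrix.mul_single_apply_same,
      Matrix.single_mul_apply_same] at this
    simpa using this
  -- rows (except row i0) are diagonal
  have fact3 : ∀ k l : Fin n, k ≠ l → k ≠ i1 → l ≠ i0 → ∀ b : Fin n, b ≠ l →
      G l b = 0 := by
    intro k l h1 h2 h3 b hb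
    have := congrFun (congrFun (hg' k l h1 h2 h3) k) b
    rw [Matrix.mul_single_apply_of_ne (hbj := hb),
      Matrix.single_mul_apply_same] at this
    simpa using this.symm
  have h01 : i0 ≠ i1 := by simp [hi0, hi1, Fin.ext_iff]
  have h02 : i0 ≠ i2 := by simp [hi0, hi2, Fin.ext_iff]
  have h12 : i1 ≠ i2 := by simp [hi1, hi2, Fin.ext_iff]
  -- off-diagonal entries vanish except (i0, i1)
  have hoff : ∀ a b : Fin n, a ≠ b → ¬(a = i0 ∧ b = i1) → G a b = 0 := by
    intro a b hab hn'
    by_cases hb1 : b = i1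
    · subst hb1
      have ha0 : a ≠ i0 := fun h => hn' ⟨h, rfl⟩
      by_cases haa : a = i2
      · exact fact3 i0 a (fun h => h02 (h.trans haa)) h01 ha0 i1 (Ne.symm hab)
      · exact fact3 i2 a (fun h => haa h.symm) h12.symm ha0 i1 (Ne.symm hab)
    · -- use fact1 with k = b
      by_cases hb2 : b = i2
      · exact fact1 b i1 hb1 hb1 h01.symm a hab
      · exact fact1 b i2 hb2 hb1 h02.symm a hab
  -- all diagonal entries are equal
  have hdiag : ∀ a : Fin n, G a a = G i2 i2 := by
    intro a
    by_cases ha2 : a = i2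
    · rw [ha2]
    · by_cases ha1 : a = i1
      · rw [ha1]; exact (fact2 i2 i1 h12.symm h12.symm h01.symm).symm
      · exact fact2 a i2 ha2 ha1 h02.symm
  set d : R := G i2 i2 with hd
  set r : R := G i0 i1 with hr
  have hform : G = d • (1 : Matrix (Fin n) (Fin n) R) + r • single i0 i1 1 := by
    ext a b
    rw [Matrix.add_apply, Matrix.smul_apply, Matrix.smul_apply]
    by_cases hab : a = b
    · subst hab
      rw [Matrix.one_apply_eq, Matrix.single_apply_of_ne]
      · rw [smul_eq_mul, mul_one, smul_zero, add_zero, hdiag]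
      · rintro ⟨h1, h2⟩; exact h01 (h1.trans h2.symm)
    · rw [Matrix.one_apply_ne hab, smul_zero, zero_add]
      by_cases h : a = i0 ∧ b = i1
      · obtain ⟨rfl, rfl⟩ := h
        rw [Matrix.single_apply_same, smul_eq_mul, mul_one]
      · rw [Matrix.single_apply_of_ne (h := by
          rintro ⟨h1, h2⟩; exact h ⟨h1.symm, h2.symm⟩), smul_zero, hoff a b hab h]
  -- determinant condition gives d ^ n = 1
  have hdet : d ^ n = 1 := by
    have h1 : G.det = 1 := g.property
    have htri : G.BlockTriangular id := by
      intro a b hab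
      apply hoff
      · exact fun h => absurd (h ▸ hab) (lt_irrefl _)
      · rintro ⟨rfl, rfl⟩
        simp only [hi0, hi1, id_eq] at hab
        exact absurd hab (by simp [Fin.lt_def])
    rw [Matrix.det_of_upperTriangular htri] at h1
    calc d ^ n = ∏ _i : Fin n, d := by
          rw [Finset.prod_const, Finset.card_univ, Fintype.card_fin]
        _ = ∏ i : Fin n, G i i := by
          refine Finset.prod_congr rfl fun i _ => ?_
          rw [hdiag i]
        _ = 1 := h1
  set s : R := r * d ^ (n - 1) with hs
  have hsd : d * s = r := by
    rw [hs, mul_comm d, mul_assoc, ← pow_succ]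
    have hnn : n - 1 + 1 = n := by omega
    rw [hnn, hdet, mul_one]
  -- the commutator equals 1 + s • E_{02}
  have hMdet := aux_det_transvection (R := R) i0 i2 h02 s
  set M : Matrix.SpecialLinearGroup (Fin n) R := ⟨_, hMdet⟩ with hM
  have hcomm : ⁅g, transvection23 R hn⁆ = M := by
    rw [commutatorElement_def, mul_inv_eq_iff_eq_mul, mul_inv_eq_iff_eq_mul]
    apply Subtype.ext
    simp only [Matrix.SpecialLinearGroup.coe_mul]
    show G * (1 + single i1 i2 1) =
      (1 + s • single i0 i2 1) * (1 + single i1 i2 1) * G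
    have e1 : single i0 i1 (1 : R) * single i1 i2 1 =
        single i0 i2 1 := by rw [Matrix.single_mul_single_same, mul_one]
    have e2 : single i0 i2 (1 : R) * single i1 i2 1 = 0 :=
      Matrix.single_mul_single_of_ne _ _ _ _ h12.symm 1
    have e3 : single i1 i2 (1 : R) * single i0 i1 1 = 0 :=
      Matrix.single_mul_single_of_ne _ _ _ _ h02.symm 1
    have e4 : single i0 i2 (1 : R) * single i0 i1 1 = 0 :=
      Matrix.single_mul_single_of_ne _ _ _ _ h02.symm 1
    rw [hform]
    simp only [mul_add, add_mul, mul_one, one_mul, Matrix.smul_mul, Matrix.mul_smul,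
      e1, e2, e3, e4, smul_zero, add_zero, zero_add, smul_smul, hsd]
    abel
  rw [hcomm]

end Aux

/-- One-parametric subgroups are Diophantine, type A instance: over a commutative ring `R`
and for `n ≥ 3`, the set of commutators `⁅g, t_{23}(1)⁆`, where `g` ranges over the
centralizer in `SL_n(R)` of `Γ = {1 + E_{kl} : k ≠ l, k ≠ 2, l ≠ 1}`, is exactly the
one-parametric root subgroup `X_{13} = {1 + r • E_{13} : r ∈ R}` (1-based indices). -/
theorem root_subgroup_diophantine_typeA {R : Type*} [CommRing R] {n : ℕ} (hn : 3 ≤ n) :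
    {m : Matrix (Fin n) (Fin n) R | ∃ g : Matrix.SpecialLinearGroup (Fin n) R,
      (∀ k l : Fin n, k ≠ l → k ≠ ⟨1, by omega⟩ → l ≠ ⟨0, by omega⟩ →
        (g : Matrix (Fin n) (Fin n) R) * (1 + single k l 1) =
          (1 + single k l 1) * (g : Matrix (Fin n) (Fin n) R)) ∧
      m = (↑(⁅g, transvection23 R hn⁆) : Matrix (Fin n) (Fin n) R)} =
    {m : Matrix (Fin n) (Fin n) R | ∃ r : R,
      m = 1 + r • single (⟨0, by omega⟩ : Fin n) (⟨2, by omega⟩ : Fin n) 1} := by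
  ext m
  simp only [Set.mem_setOf_eq]
  constructor
  · rintro ⟨g, hg, rfl⟩
    exact ⟨_, key hn g hg⟩
  · rintro ⟨r, rfl⟩
    have h01 : (⟨0, by omega⟩ : Fin n) ≠ ⟨1, by omega⟩ := by simp [Fin.ext_iff]
    have hgdet := aux_det_transvection (R := R) (⟨0, by omega⟩ : Fin n) ⟨1, by omega⟩ h01 r
    set g : Matrix.SpecialLinearGroup (Fin n) R := ⟨_, hgdet⟩ with hgdef
    have hcommg : ∀ k l : Fin n, k ≠ l → k ≠ ⟨1, by omega⟩ → l ≠ ⟨0, by omega⟩ →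
        (g : Matrix (Fin n) (Fin n) R) * (1 + single k l 1) =
          (1 + single k l 1) * (g : Matrix (Fin n) (Fin n) R) := by
      intro k l hkl hk hl
      have e1 : single (⟨0, by omega⟩ : Fin n) (⟨1, by omega⟩ : Fin n) (1 : R) *
          single k l 1 = 0 :=
        Matrix.single_mul_single_of_ne _ _ _ _ (Ne.symm hk) 1
      have e2 : single k l (1 : R) *
          single (⟨0, by omega⟩ : Fin n) (⟨1, by omega⟩ : Fin n) 1 = 0 :=
        Matrix.single_mul_single_of_ne _ _ _ _ hl 1
      show ((1 : Matrix (Fin n) (Fin n) R) +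
            r • single (⟨0, by omega⟩ : Fin n) ⟨1, by omega⟩ 1) *
          (1 + single k l 1) =
          (1 + single k l 1) *
          (1 + r • single (⟨0, by omega⟩ : Fin n) ⟨1, by omega⟩ 1)
      simp only [mul_add, add_mul, mul_one, one_mul, Matrix.smul_mul, Matrix.mul_smul,
        e1, e2, smul_zero, add_zero, zero_add]
      abel
    refine ⟨g, hcommg, ?_⟩
    rw [key hn g hcommg]
    have hcoe : (g : Matrix (Fin n) (Fin n) R) =
        1 + r • single (⟨0, by omega⟩ : Fin n) (⟨1, by omega⟩ : Fin n) 1 := rfl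
    have hv1 : (g : Matrix (Fin n) (Fin n) R) ⟨0, by omega⟩ ⟨1, by omega⟩ = r := by
      rw [hcoe, Matrix.add_apply, Matrix.one_apply_ne h01, Matrix.smul_apply,
        Matrix.single_apply_same, smul_eq_mul, mul_one, zero_add]
    have hv2 : (g : Matrix (Fin n) (Fin n) R) ⟨2, by omega⟩ ⟨2, by omega⟩ = 1 := by
      rw [hcoe, Matrix.add_apply, Matrix.one_apply_eq, Matrix.smul_apply,
        Matrix.single_apply_of_ne (h := by
          rintro ⟨h1, h2⟩
          exact absurd (Fin.mk.injEq .. ▸ h1) (by simp [Fin.ext_iff])),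
        smul_zero, add_zero]
    rw [hv1, hv2, one_pow, mul_one]
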